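/- Let u ∈ ℤ_{>0}^m, v ∈ ℤ_{>0}^n with ‖u‖₁ = ‖v‖₁ = N, and let B be a nonzero m×n nonnegative matrix. Define the expanded N×N matrix C = G(B,u,v) by: for i ∈ [m], j ∈ [n], and indices i' in the block S_i of size u_i and j' in the block T_j of size v_j, C_{i',j'} = B_{ij}/(u_i v_j). Let A^(t) be the t-th Sinkhorn–Knopp iterate on input (C, (1,1)) and B^(t) the t-th iterate on input (B, (u,v)) (row steps scale row i to sum u_i, column steps scale column j to sum v_j). Then for every t ≥ 0: (i) within each block S_i × T_j all entries of A^(t) are equal; (ii) B^(t)_{ij} = Σ_{i'∈S_i, j'∈T_j} A^(t)_{i',j'}; and consequently (iii) ‖r(A^(t)) − 1‖₁ + ‖c(A^(t)) − 1‖₁ = ‖r(B^(t)) − u‖₁ + ‖c(B^(t)) − v‖₁. -/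

import Mathlib

open Finset Matrix

/-- Row sum of a matrix. -/
def rsum {m n : ℕ} (A : Matrix (Fin m) (Fin n) ℝ) (i : Fin m) : ℝ := ∑ j, A i j

/-- Column sum of a matrix. -/
def csum {m n : ℕ} (A : Matrix (Fin m) (Fin n) ℝ) (j : Fin n) : ℝ := ∑ i, A i j

namespace SKaux


variable {m N : ℕ}

def blk (u : Fin m → ℕ) (N : ℕ) (i : Fin m) : Finset (Fin N) :=
  Finset.univ.filter (fun x : Fin N =>
    (∑ k ∈ Finset.univ.filter (fun k => k < i), u k) ≤ (x : ℕ) ∧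
    (x : ℕ) < ∑ k ∈ Finset.univ.filter (fun k => k ≤ i), u k)

lemma mem_blk {u : Fin m → ℕ} {i : Fin m} {x : Fin N} :
    x ∈ blk u N i ↔
      (∑ k ∈ Finset.univ.filter (fun k => k < i), u k) ≤ (x : ℕ) ∧
      (x : ℕ) < ∑ k ∈ Finset.univ.filter (fun k => k ≤ i), u k := by
  simp [blk]

lemma QP (u : Fin m → ℕ) (i : Fin m) :
    (∑ k ∈ Finset.univ.filter (fun k => k ≤ i), u k)
      = (∑ k ∈ Finset.univ.filter (fun k => k < i), u k) + u i := by
  have h : Finset.univ.filter (fun k => k ≤ i)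
      = insert i (Finset.univ.filter (fun k => k < i)) := by
    ext k
    simp only [Finset.mem_insert, Finset.mem_filter, Finset.mem_univ, true_and]
    constructor
    · intro hk
      rcases lt_or_eq_of_le hk with h | h
      · exact Or.inr h
      · exact Or.inl h
    · rintro (rfl | hk)
      · exact le_refl _
      · exact le_of_lt hk
  rw [h, Finset.sum_insert (by simp)]
  omega

lemma Q_le (u : Fin m → ℕ) (hsum : ∑ i, u i = N) (i : Fin m) :
    (∑ k ∈ Finset.univ.filter (fun k => k ≤ i), u k) ≤ N := by
  rw [← hsum]
  exact Finset.sum_le_sum_of_subset (Finset.filter_subset _ _)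

lemma Q_le_P (u : Fin m → ℕ) {i j : Fin m} (hij : i < j) :
    (∑ k ∈ Finset.univ.filter (fun k => k ≤ i), u k)
      ≤ ∑ k ∈ Finset.univ.filter (fun k => k < j), u k := by
  apply Finset.sum_le_sum_of_subset
  intro k hk
  simp only [Finset.mem_filter, Finset.mem_univ, true_and] at hk ⊢
  exact lt_of_le_of_lt hk hij

lemma blk_existsUnique (u : Fin m → ℕ) (hsum : ∑ i, u i = N) (x : Fin N) :
    ∃! i : Fin m, x ∈ blk u N i := by
  have hN : 0 < N := x.pos
  have hm : 0 < m := by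
    by_contra h
    push_neg at h
    interval_cases m
    simp at hsum; omega
  -- the set of i with x < Q i is nonempty
  have hT : (Finset.univ.filter (fun i : Fin m =>
      (x : ℕ) < ∑ k ∈ Finset.univ.filter (fun k => k ≤ i), u k)).Nonempty := by
    obtain ⟨m', rfl⟩ : ∃ m', m = m' + 1 := ⟨m - 1, by omega⟩
    refine ⟨Fin.last m', ?_⟩
    simp only [Finset.mem_filter, Finset.mem_univ, true_and]
    have : Finset.univ.filter (fun k : Fin (m'+1) => k ≤ Fin.last m') = Finset.univ := by
      ext k; simp [Fin.le_last]
    rw [this, hsum]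
    exact x.2
  set T := Finset.univ.filter (fun i : Fin m =>
      (x : ℕ) < ∑ k ∈ Finset.univ.filter (fun k => k ≤ i), u k) with hTdef
  set i := T.min' hT with hi
  have hiT : i ∈ T := T.min'_mem hT
  have hiQ : (x : ℕ) < ∑ k ∈ Finset.univ.filter (fun k => k ≤ i), u k := by
    simpa [hTdef] using hiT
  have hiP : (∑ k ∈ Finset.univ.filter (fun k => k < i), u k) ≤ (x : ℕ) := by
    by_cases h0 : (i : ℕ) = 0
    · have : Finset.univ.filter (fun k : Fin m => k < i) = ∅ := by
        ext k; simp only [Finset.mem_filter, Finset.mem_univ, true_and, Finset.notMem_empty,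
          iff_false]
        intro hk
        have := Fin.lt_iff_val_lt_val.mp hk
        omega
      simp [this]
    · set i' : Fin m := ⟨(i : ℕ) - 1, by omega⟩ with hi'
      have hi'i : i' < i := by
        rw [Fin.lt_iff_val_lt_val]; simp [hi']; omega
      have hnot : i' ∉ T := by
        intro hmem
        have := T.min'_le i' hmem
        exact absurd (lt_of_le_of_lt this hi'i) (lt_irrefl _)
      have hQi' : (∑ k ∈ Finset.univ.filter (fun k => k ≤ i'), u k) ≤ (x : ℕ) := by
        simp only [hTdef, Finset.mem_filter, Finset.mem_univ, true_and, not_lt] at hnot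
        exact hnot
      have : Finset.univ.filter (fun k : Fin m => k ≤ i')
          = Finset.univ.filter (fun k : Fin m => k < i) := by
        ext k
        simp only [Finset.mem_filter, Finset.mem_univ, true_and, Fin.le_iff_val_le_val,
          Fin.lt_iff_val_lt_val]
        simp [hi']
        omega
      rw [this] at hQi'
      exact hQi'
  refine ⟨i, mem_blk.mpr ⟨hiP, hiQ⟩, ?_⟩
  intro j hj
  rw [mem_blk] at hj
  rcases lt_trichotomy j i with h | h | h
  · exact absurd (lt_of_le_of_lt (le_trans (Q_le_P u h) hiP) hj.2) (lt_irrefl _)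
  · exact h
  · exact absurd (lt_of_le_of_lt (le_trans (Q_le_P u h) hj.1) hiQ) (lt_irrefl _)

lemma blk_card (u : Fin m → ℕ) (hsum : ∑ i, u i = N) (i : Fin m) :
    (blk u N i).card = u i := by
  have himg : (blk u N i).image Fin.val
      = Finset.Ico (∑ k ∈ Finset.univ.filter (fun k => k < i), u k)
          (∑ k ∈ Finset.univ.filter (fun k => k ≤ i), u k) := by
    ext a
    simp only [Finset.mem_image, Finset.mem_Ico]
    constructor
    · rintro ⟨x, hx, rfl⟩
      exact mem_blk.mp hx
    · rintro ⟨h1, h2⟩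
      have ha : a < N := lt_of_lt_of_le h2 (Q_le u hsum i)
      exact ⟨⟨a, ha⟩, mem_blk.mpr ⟨h1, h2⟩, rfl⟩
  have := congrArg Finset.card himg
  rw [Finset.card_image_of_injective _ Fin.val_injective, Nat.card_Ico] at this
  rw [this, QP]
  omega

lemma sum_blk (u : Fin m → ℕ) (hsum : ∑ i, u i = N) (f : Fin N → ℝ) :
    ∑ x, f x = ∑ i, ∑ x ∈ blk u N i, f x := by
  have hdisj : (↑(Finset.univ : Finset (Fin m)) : Set (Fin m)).PairwiseDisjoint (blk u N) := by
    intro a _ b _ hab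
    simp only [Function.onFun]
    rw [Finset.disjoint_left]
    intro x hxa hxb
    obtain ⟨i, _, huniq⟩ := blk_existsUnique u hsum x
    exact hab ((huniq a hxa).trans (huniq b hxb).symm)
  have huniv : (Finset.univ : Finset (Fin N)) = Finset.univ.biUnion (blk u N) := by
    ext x
    simp only [Finset.mem_univ, Finset.mem_biUnion, true_iff]
    obtain ⟨i, hi, _⟩ := blk_existsUnique u hsum x
    exact ⟨i, trivial, hi⟩
  rw [huniv, Finset.sum_biUnion hdisj]


lemma corr {m n N : ℕ} {u : Fin m → ℕ} {v : Fin n → ℕ}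
    (hu : ∀ i, 0 < u i) (hv : ∀ j, 0 < v j)
    (husum : ∑ i, u i = N) (hvsum : ∑ j, v j = N)
    (A : Matrix (Fin N) (Fin N) ℝ) (Bm : Matrix (Fin m) (Fin n) ℝ)
    (hconst : ∀ i j, ∀ i' ∈ blk u N i, ∀ j' ∈ blk v N j, ∀ i'' ∈ blk u N i, ∀ j'' ∈ blk v N j,
        A i' j' = A i'' j'')
    (hsum : ∀ i j, Bm i j = ∑ i' ∈ blk u N i, ∑ j' ∈ blk v N j, A i' j') :
    (∀ i, ∀ i' ∈ blk u N i, rsum A i' = rsum Bm i / u i) ∧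
    (∀ j, ∀ j' ∈ blk v N j, csum A j' = csum Bm j / v j) := by
  constructor
  · intro i i' hi'
    have key : ∀ j, ∑ j' ∈ blk v N j, A i' j' = Bm i j / u i := by
      intro j
      have h1 : Bm i j = (u i : ℝ) * ∑ j' ∈ blk v N j, A i' j' := by
        rw [hsum i j]
        have h2 : ∀ i'' ∈ blk u N i, (∑ j' ∈ blk v N j, A i'' j')
            = ∑ j' ∈ blk v N j, A i' j' := by
          intro i'' hi''
          refine Finset.sum_congr rfl fun j' hj' => ?_
          exact hconst i j i'' hi'' j' hj' i' hi' j' hj'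
        rw [Finset.sum_congr rfl h2, Finset.sum_const, blk_card u husum i, nsmul_eq_mul]
      rw [h1]
      have : (u i : ℝ) ≠ 0 := Nat.cast_ne_zero.mpr (hu i).ne'
      field_simp
    unfold rsum
    rw [sum_blk v hvsum (fun x => A i' x)]
    rw [Finset.sum_congr rfl fun j _ => key j, ← Finset.sum_div]
  · intro j j' hj'
    have key : ∀ i, ∑ i' ∈ blk u N i, A i' j' = Bm i j / v j := by
      intro i
      have h1 : Bm i j = (v j : ℝ) * ∑ i' ∈ blk u N i, A i' j' := by
        rw [hsum i j, show (∑ i' ∈ blk u N i, ∑ j' ∈ blk v N j, A i' j')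
          = ∑ j' ∈ blk v N j, ∑ i' ∈ blk u N i, A i' j' from Finset.sum_comm]
        have h2 : ∀ j'' ∈ blk v N j, (∑ i' ∈ blk u N i, A i' j'')
            = ∑ i' ∈ blk u N i, A i' j' := by
          intro j'' hj''
          refine Finset.sum_congr rfl fun i' hi' => ?_
          exact hconst i j i' hi' j'' hj'' i' hi' j' hj'
        rw [Finset.sum_congr rfl h2, Finset.sum_const, blk_card v hvsum j, nsmul_eq_mul]
      rw [h1]
      have : (v j : ℝ) ≠ 0 := Nat.cast_ne_zero.mpr (hv j).ne'
      field_simp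
    unfold csum
    rw [sum_blk u husum (fun x => A x j')]
    rw [Finset.sum_congr rfl fun i _ => key i, ← Finset.sum_div]

lemma dist_eq {m n N : ℕ} {u : Fin m → ℕ} {v : Fin n → ℕ}
    (hu : ∀ i, 0 < u i) (hv : ∀ j, 0 < v j)
    (husum : ∑ i, u i = N) (hvsum : ∑ j, v j = N)
    (A : Matrix (Fin N) (Fin N) ℝ) (Bm : Matrix (Fin m) (Fin n) ℝ)
    (hconst : ∀ i j, ∀ i' ∈ blk u N i, ∀ j' ∈ blk v N j, ∀ i'' ∈ blk u N i, ∀ j'' ∈ blk v N j,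
        A i' j' = A i'' j'')
    (hsum : ∀ i j, Bm i j = ∑ i' ∈ blk u N i, ∑ j' ∈ blk v N j, A i' j') :
    (∑ i, |rsum A i - 1|) + (∑ j, |csum A j - 1|)
      = (∑ i, |rsum Bm i - (u i : ℝ)|) + (∑ j, |csum Bm j - (v j : ℝ)|) := by
  obtain ⟨hr, hc⟩ := corr hu hv husum hvsum A Bm hconst hsum
  have habs : ∀ (w : ℕ) (r : ℝ), 0 < w → (w : ℝ) * |r / w - 1| = |r - w| := by
    intro w r hw
    have hw' : (0:ℝ) < w := by exact_mod_cast hw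
    rw [← abs_of_pos hw', ← abs_mul]
    congr 1
    field_simp
    rw [abs_of_pos hw']
  have h1 : (∑ i, |rsum A i - 1|) = ∑ i, |rsum Bm i - (u i : ℝ)| := by
    rw [sum_blk u husum (fun x => |rsum A x - 1|)]
    refine Finset.sum_congr rfl fun i _ => ?_
    rw [Finset.sum_congr rfl fun x hx => by rw [hr i x hx],
      Finset.sum_const, blk_card u husum i, nsmul_eq_mul]
    exact habs (u i) (rsum Bm i) (hu i)
  have h2 : (∑ j, |csum A j - 1|) = ∑ j, |csum Bm j - (v j : ℝ)| := by
    rw [sum_blk v hvsum (fun x => |csum A x - 1|)]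
    refine Finset.sum_congr rfl fun j _ => ?_
    rw [Finset.sum_congr rfl fun x hx => by rw [hc j x hx],
      Finset.sum_const, blk_card v hvsum j, nsmul_eq_mul]
    exact habs (v j) (csum Bm j) (hv j)
  rw [h1, h2]

end SKaux

theorem stmt4 (m n N : ℕ) (u : Fin m → ℕ) (v : Fin n → ℕ)
    (hu : ∀ i, 0 < u i) (hv : ∀ j, 0 < v j)
    (husum : ∑ i, u i = N) (hvsum : ∑ j, v j = N)
    (B : Matrix (Fin m) (Fin n) ℝ) (hB : ∀ i j, 0 ≤ B i j) (hB0 : B ≠ 0)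
    -- the consecutive index blocks `S_i ⊆ [N]` of sizes `u i` and `T_j ⊆ [N]` of sizes `v j`
    (Sblk : Fin m → Finset (Fin N)) (Tblk : Fin n → Finset (Fin N))
    (hSblk : ∀ i, Sblk i = Finset.univ.filter (fun i' : Fin N =>
      (∑ k ∈ Finset.univ.filter (fun k => k < i), u k) ≤ (i' : ℕ) ∧
      (i' : ℕ) < ∑ k ∈ Finset.univ.filter (fun k => k ≤ i), u k))
    (hTblk : ∀ j, Tblk j = Finset.univ.filter (fun j' : Fin N =>
      (∑ k ∈ Finset.univ.filter (fun k => k < j), v k) ≤ (j' : ℕ) ∧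
      (j' : ℕ) < ∑ k ∈ Finset.univ.filter (fun k => k ≤ j), v k))
    -- the expanded matrix `C = G(B,u,v)`
    (C : Matrix (Fin N) (Fin N) ℝ)
    (hC : ∀ i j, ∀ i' ∈ Sblk i, ∀ j' ∈ Tblk j, C i' j' = B i j / ((u i : ℝ) * (v j : ℝ)))
    -- the Sinkhorn–Knopp iterates `SA` on input `(C,(1,1))`
    (SA : ℕ → Matrix (Fin N) (Fin N) ℝ)
    (hCr : ∀ i, 0 < rsum C i)
    (hSAr : ∀ k i, 0 < rsum (SA k) i) (hSAc : ∀ k j, 0 < csum (SA k) j)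
    (hSA0 : ∀ i j, SA 0 i j = C i j / rsum C i)
    (hSAodd : ∀ k, Odd k → ∀ i j, SA k i j = SA (k - 1) i j / csum (SA (k - 1)) j)
    (hSAeven : ∀ k, 0 < k → Even k → ∀ i j,
      SA k i j = SA (k - 1) i j / rsum (SA (k - 1)) i)
    -- the Sinkhorn–Knopp iterates `SB` on input `(B,(u,v))`
    (SB : ℕ → Matrix (Fin m) (Fin n) ℝ)
    (hBr : ∀ i, 0 < rsum B i)
    (hSBr : ∀ k i, 0 < rsum (SB k) i) (hSBc : ∀ k j, 0 < csum (SB k) j)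
    (hSB0 : ∀ i j, SB 0 i j = (u i : ℝ) * B i j / rsum B i)
    (hSBodd : ∀ k, Odd k → ∀ i j, SB k i j = (v j : ℝ) * SB (k - 1) i j / csum (SB (k - 1)) j)
    (hSBeven : ∀ k, 0 < k → Even k → ∀ i j,
      SB k i j = (u i : ℝ) * SB (k - 1) i j / rsum (SB (k - 1)) i) :
    ∀ t : ℕ,
      (∀ i j, ∀ i' ∈ Sblk i, ∀ j' ∈ Tblk j, ∀ i'' ∈ Sblk i, ∀ j'' ∈ Tblk j,
        SA t i' j' = SA t i'' j'') ∧
      (∀ i j, SB t i j = ∑ i' ∈ Sblk i, ∑ j' ∈ Tblk j, SA t i' j') ∧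
      ((∑ i, |rsum (SA t) i - 1|) + (∑ j, |csum (SA t) j - 1|) =
        (∑ i, |rsum (SB t) i - (u i : ℝ)|) + (∑ j, |csum (SB t) j - (v j : ℝ)|)) := by
  have hS : ∀ i, Sblk i = SKaux.blk u N i := hSblk
  have hT : ∀ j, Tblk j = SKaux.blk v N j := hTblk
  simp only [hS] at hC ⊢
  simp only [hT] at hC ⊢
  have hu0 : ∀ i, (u i : ℝ) ≠ 0 := fun i => Nat.cast_ne_zero.mpr (hu i).ne'
  have hv0 : ∀ j, (v j : ℝ) ≠ 0 := fun j => Nat.cast_ne_zero.mpr (hv j).ne'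
  intro t
  induction t with
  | zero =>
    have hsumCB : ∀ i j, B i j = ∑ i' ∈ SKaux.blk u N i, ∑ j' ∈ SKaux.blk v N j, C i' j' := by
      intro i j
      rw [Finset.sum_congr rfl (fun i' hi' =>
        Finset.sum_congr rfl (fun j' hj' => hC i j i' hi' j' hj'))]
      simp only [Finset.sum_const, SKaux.blk_card u husum, SKaux.blk_card v hvsum,
        nsmul_eq_mul]
      field_simp [hu0 i, hv0 j]
    have hconstC : ∀ i j, ∀ i' ∈ SKaux.blk u N i, ∀ j' ∈ SKaux.blk v N j,
        ∀ i'' ∈ SKaux.blk u N i, ∀ j'' ∈ SKaux.blk v N j, C i' j' = C i'' j'' := by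
      intro i j i' hi' j' hj' i'' hi'' j'' hj''
      rw [hC i j i' hi' j' hj', hC i j i'' hi'' j'' hj'']
    have corrC := SKaux.corr hu hv husum hvsum C B hconstC hsumCB
    have c1 : ∀ i j, ∀ i' ∈ SKaux.blk u N i, ∀ j' ∈ SKaux.blk v N j,
        ∀ i'' ∈ SKaux.blk u N i, ∀ j'' ∈ SKaux.blk v N j,
        SA 0 i' j' = SA 0 i'' j'' := by
      intro i j i' hi' j' hj' i'' hi'' j'' hj''
      rw [hSA0, hSA0, hC i j i' hi' j' hj', hC i j i'' hi'' j'' hj'',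
        corrC.1 i i' hi', corrC.1 i i'' hi'']
    have c2 : ∀ i j, SB 0 i j = ∑ i' ∈ SKaux.blk u N i, ∑ j' ∈ SKaux.blk v N j, SA 0 i' j' := by
      intro i j
      have hterm : ∀ i' ∈ SKaux.blk u N i, ∀ j' ∈ SKaux.blk v N j,
          SA 0 i' j' = (B i j / ((u i : ℝ) * (v j : ℝ))) / (rsum B i / u i) := by
        intro i' hi' j' hj'
        rw [hSA0, hC i j i' hi' j' hj', corrC.1 i i' hi']
      rw [Finset.sum_congr rfl (fun i' hi' =>
        Finset.sum_congr rfl (fun j' hj' => hterm i' hi' j' hj'))]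
      simp only [Finset.sum_const, SKaux.blk_card u husum, SKaux.blk_card v hvsum,
        nsmul_eq_mul]
      rw [hSB0]
      have hrB : rsum B i ≠ 0 := (hBr i).ne'
      field_simp [hu0 i, hv0 j, hrB]
    exact ⟨c1, c2, SKaux.dist_eq hu hv husum hvsum (SA 0) (SB 0) c1 c2⟩
  | succ t ih =>
    obtain ⟨ih1, ih2, -⟩ := ih
    have corrT := SKaux.corr hu hv husum hvsum (SA t) (SB t) ih1 ih2
    rcases Nat.even_or_odd (t + 1) with he | ho
    · -- even step: row normalization
      have hA := hSAeven (t + 1) (Nat.succ_pos t) he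
      have hB' := hSBeven (t + 1) (Nat.succ_pos t) he
      simp only [Nat.add_sub_cancel] at hA hB'
      have c1 : ∀ i j, ∀ i' ∈ SKaux.blk u N i, ∀ j' ∈ SKaux.blk v N j,
          ∀ i'' ∈ SKaux.blk u N i, ∀ j'' ∈ SKaux.blk v N j,
          SA (t + 1) i' j' = SA (t + 1) i'' j'' := by
        intro i j i' hi' j' hj' i'' hi'' j'' hj''
        rw [hA, hA, ih1 i j i' hi' j' hj' i'' hi'' j'' hj'',
          corrT.1 i i' hi', corrT.1 i i'' hi'']
      have c2 : ∀ i j, SB (t + 1) i j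
          = ∑ i' ∈ SKaux.blk u N i, ∑ j' ∈ SKaux.blk v N j, SA (t + 1) i' j' := by
        intro i j
        have hterm : ∀ i' ∈ SKaux.blk u N i, ∀ j' ∈ SKaux.blk v N j,
            SA (t + 1) i' j' = SA t i' j' / (rsum (SB t) i / u i) := by
          intro i' hi' j' hj'
          rw [hA, corrT.1 i i' hi']
        rw [Finset.sum_congr rfl (fun i' hi' =>
          Finset.sum_congr rfl (fun j' hj' => hterm i' hi' j' hj'))]
        simp only [← Finset.sum_div]
        rw [← ih2 i j, hB' i j]
        have hrB : rsum (SB t) i ≠ 0 := (hSBr t i).ne'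
        field_simp [hu0 i, hrB]
      exact ⟨c1, c2, SKaux.dist_eq hu hv husum hvsum (SA (t + 1)) (SB (t + 1)) c1 c2⟩
    · -- odd step: column normalization
      have hA := hSAodd (t + 1) ho
      have hB' := hSBodd (t + 1) ho
      simp only [Nat.add_sub_cancel] at hA hB'
      have c1 : ∀ i j, ∀ i' ∈ SKaux.blk u N i, ∀ j' ∈ SKaux.blk v N j,
          ∀ i'' ∈ SKaux.blk u N i, ∀ j'' ∈ SKaux.blk v N j,
          SA (t + 1) i' j' = SA (t + 1) i'' j'' := by
        intro i j i' hi' j' hj' i'' hi'' j'' hj''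
        rw [hA, hA, ih1 i j i' hi' j' hj' i'' hi'' j'' hj'',
          corrT.2 j j' hj', corrT.2 j j'' hj'']
      have c2 : ∀ i j, SB (t + 1) i j
          = ∑ i' ∈ SKaux.blk u N i, ∑ j' ∈ SKaux.blk v N j, SA (t + 1) i' j' := by
        intro i j
        have hterm : ∀ i' ∈ SKaux.blk u N i, ∀ j' ∈ SKaux.blk v N j,
            SA (t + 1) i' j' = SA t i' j' / (csum (SB t) j / v j) := by
          intro i' hi' j' hj'
          rw [hA, corrT.2 j j' hj']
        rw [Finset.sum_congr rfl (fun i' hi' =>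
          Finset.sum_congr rfl (fun j' hj' => hterm i' hi' j' hj'))]
        simp only [← Finset.sum_div]
        rw [← ih2 i j, hB' i j]
        have hcB : csum (SB t) j ≠ 0 := (hSBc t j).ne'
        field_simp [hv0 j, hcB]
      exact ⟨c1, c2, SKaux.dist_eq hu hv husum hvsum (SA (t + 1)) (SB (t + 1)) c1 c2⟩
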